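/- Let g(ρ, θ) = M_ε(θ)ρ - ρ = 0 be the constraint, where M_ε(θ) is a differentiable family of matrices and ρ(θ) is a differentiable family of probability vectors satisfying the constraint with ρ(θ)·𝟙 = 1. If λ solves the adjoint equation (M_εᵀ - I)λ = -(∂_ρ J)ᵀ + ((∂_ρ J)ᵀρ) 𝟙 and J(θ) = J(ρ(θ)), then for any direction of θ, d J/dθ = λᵀ (∂_θ M_ε) ρ + c · d(𝟙ᵀρ)/dθ for some constant c; in particular, since 𝟙ᵀρ(θ) ≡ 1, the total derivative of J equals λᵀ(∂_θ M_ε)ρ. -/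

import Mathlib

open Matrix Finset

/-- Adjoint-state method for the eigenvector constraint `M_ε(θ)ρ(θ) = ρ(θ)`,
`𝟙ᵀρ(θ) = 1`: if `λ` solves `(M_εᵀ - I)λ = -(∂_ρJ)ᵀ + ((∂_ρJ)ᵀρ)𝟙`, then
`dJ/dθ = λᵀ(∂_θM_ε)ρ + c·d(𝟙ᵀρ)/dθ` for some constant `c`, and in particular
(since `𝟙ᵀρ ≡ 1`) `dJ/dθ = λᵀ(∂_θM_ε)ρ`. -/
theorem adjoint_state_gradient
    (N : ℕ) (Mε : ℝ → Matrix (Fin N) (Fin N) ℝ) (ρ : ℝ → Fin N → ℝ)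
    (θ₀ : ℝ)
    (hconstr : ∀ θ, (Mε θ).mulVec (ρ θ) = ρ θ)
    (hnorm : ∀ θ, ∑ i, ρ θ i = 1)
    (M' : Matrix (Fin N) (Fin N) ℝ)
    (hM' : ∀ i j, HasDerivAt (fun θ => Mε θ i j) (M' i j) θ₀)
    (ρ' : Fin N → ℝ)
    (hρ' : ∀ i, HasDerivAt (fun θ => ρ θ i) (ρ' i) θ₀)
    (J : (Fin N → ℝ) → ℝ) (hJ : DifferentiableAt ℝ J (ρ θ₀))
    (g : Fin N → ℝ) (hg : ∀ i, g i = fderiv ℝ J (ρ θ₀) (Pi.single i 1))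
    (lam : Fin N → ℝ)
    (hadj : ∀ i, (∑ j, Mε θ₀ j i * lam j) - lam i =
      -(g i) + (∑ j, g j * ρ θ₀ j)) :
    (∃ c : ℝ, HasDerivAt (fun θ => J (ρ θ))
        (lam ⬝ᵥ (M'.mulVec (ρ θ₀)) + c * (∑ i, ρ' i)) θ₀) ∧
    HasDerivAt (fun θ => J (ρ θ)) (lam ⬝ᵥ (M'.mulVec (ρ θ₀))) θ₀ := by
  -- derivative of ρ as a curve
  have hρd : HasDerivAt ρ ρ' θ₀ := hasDerivAt_pi.mpr hρ'
  -- chain rule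
  have hchain : HasDerivAt (fun θ => J (ρ θ)) (fderiv ℝ J (ρ θ₀) ρ') θ₀ :=
    hJ.hasFDerivAt.comp_hasDerivAt θ₀ hρd
  -- ∑ ρ' = 0
  have hsum0 : ∑ i, ρ' i = 0 := by
    have h1 : HasDerivAt (fun θ => ∑ i, ρ θ i) (∑ i, ρ' i) θ₀ :=
      HasDerivAt.fun_sum (fun i _ => hρ' i)
    have h2 : (fun θ => ∑ i, ρ θ i) = fun _ : ℝ => (1 : ℝ) := funext hnorm
    rw [h2] at h1
    exact h1.unique (hasDerivAt_const _ _)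
  -- linearize fderiv along basis
  have hlin : fderiv ℝ J (ρ θ₀) ρ' = ∑ i, ρ' i * g i := by
    have hdecomp : ρ' = ∑ i, ρ' i • (Pi.single i (1 : ℝ) : Fin N → ℝ) := by
      funext j
      simp [Finset.sum_apply, Pi.single_apply, mul_comm]
    conv_lhs => rw [hdecomp]
    rw [map_sum]
    refine Finset.sum_congr rfl fun i _ => ?_
    rw [_root_.map_smul, hg i]
    simp [smul_eq_mul]
  -- constraint derivative: M'ρ + Mε ρ' = ρ'
  have hcd : ∀ i, M'.mulVec (ρ θ₀) i + (Mε θ₀).mulVec ρ' i = ρ' i := by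
    intro i
    have h1 : HasDerivAt (fun θ => ∑ j, Mε θ i j * ρ θ j)
        (∑ j, (M' i j * ρ θ₀ j + Mε θ₀ i j * ρ' j)) θ₀ :=
      HasDerivAt.fun_sum (fun j _ => (hM' i j).mul (hρ' j))
    have h2 : (fun θ => ∑ j, Mε θ i j * ρ θ j) = fun θ => ρ θ i := by
      funext θ
      have := congrFun (hconstr θ) i
      simpa [Matrix.mulVec, dotProduct] using this
    rw [h2] at h1
    have h3 := h1.unique (hρ' i)
    simpa [Matrix.mulVec, dotProduct, Finset.sum_add_distrib] using h3
  -- key identity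
  have hkey : lam ⬝ᵥ M'.mulVec (ρ θ₀) = ∑ i, ρ' i * g i := by
    have e1 : lam ⬝ᵥ M'.mulVec (ρ θ₀) =
        ∑ i, lam i * (ρ' i - (Mε θ₀).mulVec ρ' i) := by
      refine Finset.sum_congr rfl fun i _ => ?_
      rw [← hcd i]; ring
    rw [e1]
    have e2 : ∑ i, lam i * ((Mε θ₀).mulVec ρ' i) =
        ∑ j, (∑ i, Mε θ₀ i j * lam i) * ρ' j := by
      simp only [Matrix.mulVec, dotProduct, Finset.mul_sum, Finset.sum_mul]
      rw [Finset.sum_comm]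
      apply Finset.sum_congr rfl; intros; apply Finset.sum_congr rfl; intros; ring
    have e3 : ∑ i, lam i * (ρ' i - (Mε θ₀).mulVec ρ' i) =
        ∑ i, lam i * ρ' i - ∑ i, lam i * ((Mε θ₀).mulVec ρ' i) := by
      rw [← Finset.sum_sub_distrib]
      apply Finset.sum_congr rfl; intros; ring
    rw [e3, e2]
    have e4 : ∑ i, lam i * ρ' i - ∑ j, (∑ i, Mε θ₀ i j * lam i) * ρ' j =
        ∑ j, (lam j - ∑ i, Mε θ₀ i j * lam i) * ρ' j := by
      rw [← Finset.sum_sub_distrib]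
      apply Finset.sum_congr rfl; intros; ring
    rw [e4]
    have e5 : ∀ j, lam j - ∑ i, Mε θ₀ i j * lam i =
        g j - (∑ k, g k * ρ θ₀ k) := by
      intro j
      have := hadj j
      linarith [hadj j]
    calc ∑ j, (lam j - ∑ i, Mε θ₀ i j * lam i) * ρ' j
        = ∑ j, (g j - (∑ k, g k * ρ θ₀ k)) * ρ' j := by
          apply Finset.sum_congr rfl; intro j _; rw [e5 j]
      _ = ∑ j, g j * ρ' j - (∑ k, g k * ρ θ₀ k) * ∑ j, ρ' j := by
          rw [Finset.mul_sum, ← Finset.sum_sub_distrib]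
          apply Finset.sum_congr rfl; intros; ring
      _ = ∑ j, ρ' j * g j := by
          rw [hsum0, mul_zero, sub_zero]
          apply Finset.sum_congr rfl; intros; ring
  have hmain : HasDerivAt (fun θ => J (ρ θ)) (lam ⬝ᵥ M'.mulVec (ρ θ₀)) θ₀ := by
    rw [hkey, ← hlin]; exact hchain
  refine ⟨⟨0, ?_⟩, hmain⟩
  simpa using hmain
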